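/- For any irrational real number α and any x₀ ∈ T¹, there exists a sequence of radii r_n ≥ 0 with ∑ r_n = ∞ such that the set of x ∈ T¹ with x + nα ∈ B(x₀, r_n) for infinitely many n is empty. -/

import Mathlib

open MeasureTheory Filter Metric ENNReal Topology

private lemma stmt17_nsmul_ne_zero {α : ℝ} (hα : Irrational α) {q : ℕ} (hq : 0 < q) :
    q • ((α : AddCircle (1:ℝ))) ≠ 0 := by
  intro h
  rw [← AddCircle.coe_nsmul, AddCircle.coe_eq_zero_iff] at h
  obtain ⟨z, hz⟩ := h
  have hq0 : (q : ℝ) ≠ 0 := Nat.cast_ne_zero.2 hq.ne'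
  have hz' : (z : ℝ) = q * α := by
    have : (q : ℝ) • α = q * α := by simp [nsmul_eq_mul]
    simpa [zsmul_eq_mul, nsmul_eq_mul] using hz
  refine hα ⟨(z : ℚ) / (q : ℚ), ?_⟩
  push_cast
  field_simp
  linarith [hz']

private lemma stmt17_exists_small {α : ℝ} (hα : Irrational α) {ε : ℝ} (hε : 0 < ε) :
    ∃ q : ℕ, 0 < q ∧ 0 < ‖q • ((α : AddCircle (1:ℝ)))‖ ∧
      ‖q • ((α : AddCircle (1:ℝ)))‖ < ε := by
  haveI : Fact ((0:ℝ) < 1) := ⟨one_pos⟩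
  set A : AddCircle (1:ℝ) := (α : AddCircle (1:ℝ)) with hA
  obtain ⟨a, -, φ, hφ, hlim⟩ :=
    isCompact_univ.tendsto_subseq (x := fun n : ℕ => n • A) (fun n => Set.mem_univ _)
  have hc : CauchySeq (fun k => φ k • A) := hlim.cauchySeq
  rw [Metric.cauchySeq_iff] at hc
  obtain ⟨N, hN⟩ := hc ε hε
  have h1 : dist (φ (N+1) • A) (φ N • A) < ε := hN _ (Nat.le_succ N) _ le_rfl
  have hlt : φ N < φ (N+1) := hφ (Nat.lt_succ_self N)
  refine ⟨φ (N+1) - φ N, Nat.sub_pos_of_lt hlt, ?_, ?_⟩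
  · have hne : (φ (N+1) - φ N) • A ≠ 0 :=
      stmt17_nsmul_ne_zero hα (Nat.sub_pos_of_lt hlt)
    exact norm_pos_iff.2 hne
  · have heq : (φ (N+1) - φ N) • A = φ (N+1) • A - φ N • A :=
      sub_nsmul A hlt.le
    rw [heq, ← dist_eq_norm]
    exact h1

private lemma stmt17_dense {α : ℝ} (hα : Irrational α) (y : AddCircle (1:ℝ)) {ε : ℝ}
    (hε : 0 < ε) : ∃ n : ℕ, dist (n • ((α : AddCircle (1:ℝ)))) y < ε := by
  classical
  obtain ⟨q, hq, hpos, hlt⟩ := stmt17_exists_small hα hε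
  set A : AddCircle (1:ℝ) := (α : AddCircle (1:ℝ)) with hA
  set b : ℝ := q * α - round (q * α) with hb
  have hbcoe : ((b : ℝ) : AddCircle (1:ℝ)) = q • A := by
    rw [hb, AddCircle.coe_sub]
    have h0 : ((round (q * α) : ℝ) : AddCircle (1:ℝ)) = 0 := by
      rw [AddCircle.coe_eq_zero_iff]
      exact ⟨round (q * α), by simp⟩
    rw [h0, sub_zero, ← AddCircle.coe_nsmul, nsmul_eq_mul]
  have hbnorm : |b| = ‖q • A‖ := by
    rw [← hbcoe, AddCircle.norm_eq]
    simp [hb]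
  have hb0 : b ≠ 0 := by
    intro h
    rw [h, abs_zero] at hbnorm
    exact hpos.ne (hbnorm)
  obtain ⟨yr, rfl⟩ : ∃ yr : ℝ, (yr : AddCircle (1:ℝ)) = y := Quot.exists_rep y
  -- choose a lift t of y with t/b ≥ 0
  set t : ℝ := if 0 < b then Int.fract yr else Int.fract yr - 1 with ht
  have htcoe : ((t : ℝ) : AddCircle (1:ℝ)) = (yr : AddCircle (1:ℝ)) := by
    have h1 : ((Int.fract yr : ℝ) : AddCircle (1:ℝ)) = (yr : AddCircle (1:ℝ)) := by
      rw [Int.fract]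
      rw [AddCircle.coe_sub]
      have : (((⌊yr⌋ : ℝ)) : AddCircle (1:ℝ)) = 0 := by
        rw [AddCircle.coe_eq_zero_iff]; exact ⟨⌊yr⌋, by simp⟩
      rw [this, sub_zero]
    rw [ht]
    split_ifs with h
    · exact h1
    · rw [sub_eq_add_neg, AddCircle.coe_add, h1]
      have : (((-1 : ℝ)) : AddCircle (1:ℝ)) = 0 := by
        rw [AddCircle.coe_eq_zero_iff]; exact ⟨-1, by simp⟩
      rw [this, add_zero]
  have htb : 0 ≤ t / b := by
    rcases lt_or_gt_of_ne hb0 with hneg | hposb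
    · rw [ht, if_neg (not_lt.2 hneg.le)]
      rw [div_nonneg_iff]
      right
      refine ⟨?_, hneg.le⟩
      have := Int.fract_lt_one yr
      linarith
    · rw [ht, if_pos hposb]
      exact div_nonneg (Int.fract_nonneg yr) hposb.le
  set j : ℤ := round (t / b) with hj
  have hj0 : 0 ≤ j := by
    rw [hj, round_eq]
    apply Int.floor_nonneg.2
    linarith
  refine ⟨j.toNat * q, ?_⟩
  have hsmul : (j.toNat * q) • A = ((((j : ℝ) * b) : ℝ) : AddCircle (1:ℝ)) := by
    rw [mul_comm, mul_nsmul, ← hbcoe, ← AddCircle.coe_nsmul]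
    have : j.toNat • b = (j : ℝ) * b := by
      rw [nsmul_eq_mul]
      congr 1
      exact_mod_cast congrArg (fun z : ℤ => (z : ℝ)) (Int.toNat_of_nonneg hj0)
    rw [this]
  rw [hsmul, dist_eq_norm, ← htcoe, ← AddCircle.coe_sub]
  have hle : ‖((((j : ℝ) * b - t) : ℝ) : AddCircle (1:ℝ))‖ ≤ |(j : ℝ) * b - t| := by
    have := QuotientAddGroup.norm_mk_le_norm (S := AddSubgroup.zmultiples (1:ℝ)) (m := (j : ℝ) * b - t)
    simpa [Real.norm_eq_abs] using this
  have hkey : |(j : ℝ) * b - t| ≤ |b| / 2 := by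
    have h1 : (j : ℝ) * b - t = -(b * (t / b - (j : ℝ))) := by
      field_simp
      ring
    rw [h1, abs_neg, abs_mul]
    have h2 : |t / b - (j : ℝ)| ≤ 1 / 2 := by
      simpa [hj] using abs_sub_round (t / b)
    calc |b| * |t / b - (j : ℝ)| ≤ |b| * (1 / 2) := by
          exact mul_le_mul_of_nonneg_left h2 (abs_nonneg b)
      _ = |b| / 2 := by ring
  have : |b| / 2 < ε := by
    rw [hbnorm]
    linarith
  calc ‖((((j : ℝ) * b - t) : ℝ) : AddCircle (1:ℝ))‖ ≤ |(j : ℝ) * b - t| := hle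
    _ ≤ |b| / 2 := hkey
    _ < ε := this

private lemma stmt17_orbit {α : ℝ} (hα : Irrational α) (x₀ y : AddCircle (1:ℝ)) {ε : ℝ}
    (hε : 0 < ε) (N : ℕ) :
    ∃ n : ℕ, N < n ∧ dist (x₀ - n • ((α : AddCircle (1:ℝ)))) y < ε := by
  set A : AddCircle (1:ℝ) := (α : AddCircle (1:ℝ)) with hA
  obtain ⟨m, hm⟩ := stmt17_dense hα (x₀ - (N+1) • A - y) hε
  refine ⟨N + 1 + m, by omega, ?_⟩
  have heq : x₀ - (N + 1 + m) • A - y = -(m • A - (x₀ - (N+1) • A - y)) := by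
    rw [add_nsmul]
    abel
  rw [dist_eq_norm, heq, norm_neg, ← dist_eq_norm]
  exact hm

/-- For any irrational rotation of the circle and any center, there are radii with
`∑ rₙ = ∞` such that no point hits the shrinking target infinitely often. -/
theorem stmt17 (α : ℝ) (hα : Irrational α) (x₀ : AddCircle (1:ℝ)) :
    ∃ r : ℕ → ℝ, (∀ n, 0 ≤ r n) ∧ ¬ Summable r ∧
      {x : AddCircle (1:ℝ) |
        ∃ᶠ n in atTop, x + n • ((α : AddCircle (1:ℝ))) ∈ ball x₀ (r n)} = ∅ := by
  classical
  haveI : Fact ((0:ℝ) < 1) := ⟨one_pos⟩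
  set A : AddCircle (1:ℝ) := (α : AddCircle (1:ℝ)) with hA
  set c : ℕ → AddCircle (1:ℝ) := fun n => x₀ - n • A with hc
  set a : AddCircle (1:ℝ) := x₀ with ha
  set t : ℕ → ℝ := fun k => (1/((k:ℝ)+3) + 1/((k:ℝ)+2))/2 with htdef
  set e : ℕ → ℝ := fun k => (1/((k:ℝ)+2) - 1/((k:ℝ)+3))/2 with hedef
  have hk2 : ∀ k : ℕ, (0:ℝ) < (k:ℝ) + 2 := fun k => by positivity
  have hk3 : ∀ k : ℕ, (0:ℝ) < (k:ℝ) + 3 := fun k => by positivity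
  have hlt32 : ∀ k : ℕ, 1/((k:ℝ)+3) < 1/((k:ℝ)+2) := fun k => by
    apply one_div_lt_one_div_of_lt (hk2 k); linarith
  have ht_pos : ∀ k, 0 < t k := fun k => by
    have h3 := hk3 k; have h2 := hk2 k
    have : (0:ℝ) < 1/((k:ℝ)+3) := by positivity
    have : (0:ℝ) < 1/((k:ℝ)+2) := by positivity
    simp only [htdef]; linarith
  have he_pos : ∀ k, 0 < e k := fun k => by
    have := hlt32 k; simp only [hedef]; linarith
  have ht_lt : ∀ k, t k < 1/2 := fun k => by
    have h3 : 1/((k:ℝ)+3) ≤ 1/3 := by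
      apply one_div_le_one_div_of_le (by norm_num); push_cast; linarith [Nat.cast_nonneg (α := ℝ) k]
    have h2 : 1/((k:ℝ)+2) ≤ 1/2 := by
      apply one_div_le_one_div_of_le (by norm_num); push_cast; linarith [Nat.cast_nonneg (α := ℝ) k]
    simp only [htdef]; linarith
  set y : ℕ → AddCircle (1:ℝ) := fun k => a + ((t k : ℝ) : AddCircle (1:ℝ)) with hy
  have hy_dist : ∀ k, dist (y k) a = t k := by
    intro k
    have h1 : y k - a = ((t k : ℝ) : AddCircle (1:ℝ)) := by simp [hy]
    rw [dist_eq_norm, h1, AddCircle.norm_eq]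
    have hr : round ((1:ℝ)⁻¹ * t k) = 0 := by
      rw [round_eq_zero_iff]
      constructor
      · simp only [inv_one, one_mul]; linarith [ht_pos k]
      · simp only [inv_one, one_mul]; exact ht_lt k
    rw [hr]
    simp only [Int.cast_zero, zero_mul, sub_zero, inv_one, one_mul]
    exact abs_of_pos (ht_pos k)
  have hstep : ∀ k N : ℕ, ∃ n, N < n ∧ dist (c n) (y k) < e k := fun k N =>
    stmt17_orbit hα x₀ (y k) (he_pos k) N
  choose F hF1 hF2 using hstep
  set seq : ℕ → ℕ := fun k => Nat.rec (F 0 0) (fun k ih => F (k+1) ih) k with hseq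
  have hseq0 : seq 0 = F 0 0 := rfl
  have hseq_succ : ∀ k, seq (k+1) = F (k+1) (seq k) := fun k => rfl
  have hmono : StrictMono seq := by
    apply strictMono_nat_of_lt_succ
    intro k
    rw [hseq_succ k]
    exact hF1 (k+1) (seq k)
  have hclose : ∀ k, dist (c (seq k)) (y k) < e k := by
    intro k
    cases k with
    | zero => rw [hseq0]; exact hF2 0 0
    | succ k => rw [hseq_succ k]; exact hF2 (k+1) (seq k)
  have hlow : ∀ k : ℕ, 1/((k:ℝ)+3) < dist (c (seq k)) a := by
    intro k
    have h1 := hclose k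
    have h2 := hy_dist k
    have h3 : dist (y k) a ≤ dist (y k) (c (seq k)) + dist (c (seq k)) a := dist_triangle _ _ _
    rw [dist_comm (y k) (c (seq k))] at h3
    have : t k - e k = 1/((k:ℝ)+3) := by simp only [htdef, hedef]; ring
    linarith
  have hhigh : ∀ k : ℕ, dist (c (seq k)) a < 1/((k:ℝ)+2) := by
    intro k
    have h1 := hclose k
    have h2 := hy_dist k
    have h3 : dist (c (seq k)) a ≤ dist (c (seq k)) (y k) + dist (y k) a := dist_triangle _ _ _
    have : t k + e k = 1/((k:ℝ)+2) := by simp only [htdef, hedef]; ring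
    linarith
  refine ⟨fun m => if m ∈ Set.range seq then dist (c m) a else 0, ?_, ?_, ?_⟩
  · intro n
    dsimp only
    split_ifs
    · exact dist_nonneg
    · exact le_rfl
  · intro hsum
    have h2 : Summable (fun k =>
        (fun m => if m ∈ Set.range seq then dist (c m) a else 0) (seq k)) :=
      hsum.comp_injective hmono.injective
    have h3 : ∀ k : ℕ, 1/((k:ℝ)+3) ≤
        (fun m => if m ∈ Set.range seq then dist (c m) a else 0) (seq k) := by
      intro k
      dsimp only
      rw [if_pos ⟨k, rfl⟩]
      exact (hlow k).le
    have h4 : Summable (fun k : ℕ => 1/((k:ℝ)+3)) :=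
      Summable.of_nonneg_of_le (fun k => by positivity) h3 h2
    apply Real.not_summable_one_div_natCast
    rw [← summable_nat_add_iff 3]
    convert h4 using 2 with k
    · rfl
    push_cast
    ring
  · ext x
    simp only [Set.mem_setOf_eq, Set.mem_empty_iff_false, iff_false]
    intro hx
    have key : ∀ m : ℕ, (x + m • A ∈
        ball x₀ (if m ∈ Set.range seq then dist (c m) a else 0)) →
        m ∈ Set.range seq ∧ dist x (c m) < dist (c m) a := by
      intro m hm
      rw [mem_ball] at hm
      have hd : dist (x + m • A) x₀ = dist x (c m) := by
        rw [dist_eq_norm, dist_eq_norm]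
        congr 1
        simp only [hc]
        abel
      by_cases h : m ∈ Set.range seq
      · rw [if_pos h] at hm
        rw [hd] at hm
        exact ⟨h, hm⟩
      · rw [if_neg h] at hm
        exact absurd (hd ▸ hm) (not_lt.2 dist_nonneg)
    by_cases hxa : x = a
    · obtain ⟨m, hm⟩ := hx.exists
      obtain ⟨-, h2⟩ := key m hm
      rw [hxa, dist_comm] at h2
      exact lt_irrefl _ h2
    · have hd0 : 0 < dist x a := dist_pos.2 hxa
      obtain ⟨K, hK⟩ := exists_nat_gt (2 / dist x a)
      have hK0 : (0:ℝ) < K := lt_of_le_of_lt (by positivity) hK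
      obtain ⟨m, hm, hmK⟩ := (hx.and_eventually (eventually_gt_atTop (seq K))).exists
      obtain ⟨⟨k, rfl⟩, h2⟩ := key m hm
      have hkK : K < k := hmono.lt_iff_lt.1 hmK
      have h3 : dist (c (seq k)) a < 1/((k:ℝ)+2) := hhigh k
      have h4 : dist x a ≤ dist x (c (seq k)) + dist (c (seq k)) a := dist_triangle _ _ _
      have h5 : 1/((k:ℝ)+2) ≤ 1/(K:ℝ) := by
        apply one_div_le_one_div_of_le hK0
        have : ((K:ℝ)) < (k:ℝ) := by exact_mod_cast hkK
        linarith
      have h6 : 2/(K:ℝ) < dist x a := by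
        rw [div_lt_iff₀ hK0]
        rw [div_lt_iff₀ hd0] at hK
        linarith [mul_comm (dist x a) (K:ℝ)]
      have : dist x a < 2 * (1/((k:ℝ)+2)) := by linarith
      have : dist x a < 2/(K:ℝ) := by
        have := h5
        rw [div_eq_mul_one_div 2 (K:ℝ)]
        linarith
      linarith
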